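/- Let k be real with 0 < |k| < 1/4, and define r(x:y:z) = |Φ_k(x,y,z)|/(x²+y²)² where Φ_k = x²y² − (x²+y²)z² + kz⁴. For the real map f₀ induced by F₀(x,y,z) = (−2xy(x²+y²−2kz²), y⁴−x⁴, 2xy(x²−y²)), one has r(f₀(x:y:z)) ≤ 4|k| · r(x:y:z) for all real (x,y,z) with (x,y) ≠ (0,0). Hence all orbits in ℙ²(ℝ)∖{(0:0:1)} converge to the Cassini curve Φ_k = 0. -/
import Mathlib


open Filter

/-- The real Cassini quartic `Φ_k(x,y,z) = x²y² − (x²+y²)z² + kz⁴`. -/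
noncomputable def cassiniPhiR (k x y z : ℝ) : ℝ :=
  x ^ 2 * y ^ 2 - (x ^ 2 + y ^ 2) * z ^ 2 + k * z ^ 4

/-- The real homogeneous map `F₀(x,y,z) = (−2xy(x²+y²−2kz²), y⁴−x⁴, 2xy(x²−y²))`. -/
noncomputable def cassiniF0R (k : ℝ) (v : ℝ × ℝ × ℝ) : ℝ × ℝ × ℝ :=
  (-2 * v.1 * v.2.1 * (v.1 ^ 2 + v.2.1 ^ 2 - 2 * k * v.2.2 ^ 2),
   v.2.1 ^ 4 - v.1 ^ 4,
   2 * v.1 * v.2.1 * (v.1 ^ 2 - v.2.1 ^ 2))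

/-- The distance-like ratio `r(x:y:z) = |Φ_k(x,y,z)|/(x²+y²)²` measuring distance from the
Cassini curve `Φ_k = 0`. -/
noncomputable def cassiniR (k : ℝ) (v : ℝ × ℝ × ℝ) : ℝ :=
  |cassiniPhiR k v.1 v.2.1 v.2.2| / (v.1 ^ 2 + v.2.1 ^ 2) ^ 2

/-- **A trapped attractor for the Cassini map** (Theorem 7.2, case `a = 0`).
Let `0 < |k| < 1/4`.  For the real map `f₀` induced by `F₀`, one has
`r(f₀(x:y:z)) ≤ 4|k|·r(x:y:z)` for all real homogeneous representatives `(x,y,z)` with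
`(x,y) ≠ (0,0)`.  Hence every orbit in `ℙ²(ℝ) ∖ {(0:0:1)}` (i.e. whose iterates all satisfy
`(x,y) ≠ (0,0)`) converges to the Cassini curve `Φ_k = 0`, in the sense that `r → 0` along
the orbit. -/
theorem cassini_trapped_attractor (k : ℝ) (hk0 : k ≠ 0) (hk : |k| < 1 / 4) :
    (∀ v : ℝ × ℝ × ℝ, (v.1, v.2.1) ≠ ((0 : ℝ), (0 : ℝ)) →
      cassiniR k (cassiniF0R k v) ≤ 4 * |k| * cassiniR k v) ∧
    (∀ v : ℝ × ℝ × ℝ,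
      (∀ n : ℕ, (((cassiniF0R k)^[n] v).1, ((cassiniF0R k)^[n] v).2.1) ≠ ((0 : ℝ), (0 : ℝ))) →
      Tendsto (fun n : ℕ => cassiniR k ((cassiniF0R k)^[n] v)) atTop (nhds 0)) := by
  have hrnn : ∀ w : ℝ × ℝ × ℝ, 0 ≤ cassiniR k w := fun w =>
    div_nonneg (abs_nonneg _) (by positivity)
  have part1 : ∀ v : ℝ × ℝ × ℝ, (v.1, v.2.1) ≠ ((0 : ℝ), (0 : ℝ)) →
      cassiniR k (cassiniF0R k v) ≤ 4 * |k| * cassiniR k v := by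
    rintro ⟨x, y, z⟩ hv
    have hS : 0 < x ^ 2 + y ^ 2 := by
      rcases eq_or_ne x 0 with hx | hx
      · rcases eq_or_ne y 0 with hy | hy
        · exact absurd (by rw [hx, hy]) hv
        · positivity
      · positivity
    have key : cassiniPhiR k (cassiniF0R k (x, y, z)).1 (cassiniF0R k (x, y, z)).2.1
        (cassiniF0R k (x, y, z)).2.2
        = 16 * k * x ^ 2 * y ^ 2 * (x ^ 2 - y ^ 2) ^ 4 * cassiniPhiR k x y z := by
      simp only [cassiniPhiR, cassiniF0R]
      ring
    set P := cassiniPhiR k x y z with hP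
    have habs : |cassiniPhiR k (cassiniF0R k (x, y, z)).1 (cassiniF0R k (x, y, z)).2.1
        (cassiniF0R k (x, y, z)).2.2|
        = 16 * x ^ 2 * y ^ 2 * (x ^ 2 - y ^ 2) ^ 4 * (|k| * |P|) := by
      rw [key, show 16 * k * x ^ 2 * y ^ 2 * (x ^ 2 - y ^ 2) ^ 4 * P
        = (16 * x ^ 2 * y ^ 2 * (x ^ 2 - y ^ 2) ^ 4) * (k * P) by ring,
        abs_mul, abs_mul, abs_mul k P,
        abs_of_nonneg (by positivity : (0:ℝ) ≤ 16 * x ^ 2 * y ^ 2),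
        abs_of_nonneg (by positivity : (0:ℝ) ≤ (x ^ 2 - y ^ 2) ^ 4)]
    -- write the goal explicitly
    show |cassiniPhiR k (cassiniF0R k (x, y, z)).1 (cassiniF0R k (x, y, z)).2.1
        (cassiniF0R k (x, y, z)).2.2|
        / ((cassiniF0R k (x, y, z)).1 ^ 2 + (cassiniF0R k (x, y, z)).2.1 ^ 2) ^ 2
        ≤ 4 * |k| * (|P| / (x ^ 2 + y ^ 2) ^ 2)
    rw [habs]
    set X := (cassiniF0R k (x, y, z)).1 with hX
    have hY : (cassiniF0R k (x, y, z)).2.1 = y ^ 4 - x ^ 4 := rfl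
    rw [hY]
    have hD : (x ^ 2 - y ^ 2) ^ 4 * ((x ^ 2 + y ^ 2) ^ 2) ^ 2
        ≤ (X ^ 2 + (y ^ 4 - x ^ 4) ^ 2) ^ 2 := by
      have h1 : (y ^ 4 - x ^ 4) ^ 2 ≤ X ^ 2 + (y ^ 4 - x ^ 4) ^ 2 := by nlinarith [sq_nonneg X]
      have h2 : ((y ^ 4 - x ^ 4) ^ 2) ^ 2 ≤ (X ^ 2 + (y ^ 4 - x ^ 4) ^ 2) ^ 2 :=
        pow_le_pow_left₀ (sq_nonneg _) h1 2
      nlinarith [h2]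
    rcases eq_or_ne (x * y * (x ^ 2 - y ^ 2)) 0 with h0 | h0
    · have hzero : 16 * x ^ 2 * y ^ 2 * (x ^ 2 - y ^ 2) ^ 4 * (|k| * |P|) = 0 := by
        have : x ^ 2 * y ^ 2 * (x ^ 2 - y ^ 2) ^ 4
            = (x * y * (x ^ 2 - y ^ 2)) ^ 2 * (x ^ 2 - y ^ 2) ^ 2 := by ring
        rw [show (16:ℝ) * x ^ 2 * y ^ 2 * (x ^ 2 - y ^ 2) ^ 4 * (|k| * |P|)
          = 16 * ((x * y * (x ^ 2 - y ^ 2)) ^ 2 * (x ^ 2 - y ^ 2) ^ 2) * (|k| * |P|) by ring,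
          h0]
        ring
      rw [hzero, zero_div]
      have : 0 ≤ |P| / (x ^ 2 + y ^ 2) ^ 2 := div_nonneg (abs_nonneg _) (by positivity)
      positivity
    · have hxy2 : x ^ 2 - y ^ 2 ≠ 0 := fun h => h0 (by rw [h]; ring)
      have hDpos : 0 < (X ^ 2 + (y ^ 4 - x ^ 4) ^ 2) ^ 2 := by
        have : 0 < (x ^ 2 - y ^ 2) ^ 4 * ((x ^ 2 + y ^ 2) ^ 2) ^ 2 := by positivity
        linarith
      have hS2 : (0:ℝ) < (x ^ 2 + y ^ 2) ^ 2 := by positivity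
      rw [show 4 * |k| * (|P| / (x ^ 2 + y ^ 2) ^ 2) = (4 * |k| * |P|) / (x ^ 2 + y ^ 2) ^ 2 by
        rw [mul_div_assoc], div_le_div_iff₀ hDpos hS2]
      have h16 : 16 * (x ^ 2 * y ^ 2) ≤ 4 * (x ^ 2 + y ^ 2) ^ 2 := by
        nlinarith [sq_nonneg (x ^ 2 - y ^ 2)]
      have hkP : (0:ℝ) ≤ |k| * |P| := by positivity
      nlinarith [mul_le_mul_of_nonneg_left hD (by positivity : (0:ℝ) ≤ 4 * (|k| * |P|)),
        mul_le_mul_of_nonneg_right h16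
          (by positivity : (0:ℝ) ≤ |k| * |P| * ((x ^ 2 - y ^ 2) ^ 4 * (x ^ 2 + y ^ 2) ^ 2))]
  refine ⟨part1, fun v hv => ?_⟩
  have hstep : ∀ n : ℕ, cassiniR k ((cassiniF0R k)^[n] v) ≤ (4 * |k|) ^ n * cassiniR k v := by
    intro n
    induction n with
    | zero => simp
    | succ n ih =>
      rw [Function.iterate_succ_apply']
      calc cassiniR k (cassiniF0R k ((cassiniF0R k)^[n] v))
          ≤ 4 * |k| * cassiniR k ((cassiniF0R k)^[n] v) := part1 _ (hv n)
        _ ≤ 4 * |k| * ((4 * |k|) ^ n * cassiniR k v) := by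
            have : (0:ℝ) ≤ 4 * |k| := by positivity
            exact mul_le_mul_of_nonneg_left ih this
        _ = (4 * |k|) ^ (n + 1) * cassiniR k v := by ring
  have hlim : Tendsto (fun n : ℕ => (4 * |k|) ^ n * cassiniR k v) atTop (nhds 0) := by
    have h1 : Tendsto (fun n : ℕ => (4 * |k|) ^ n) atTop (nhds 0) := by
      apply tendsto_pow_atTop_nhds_zero_of_lt_one (by positivity) (by linarith)
    simpa using h1.mul_const (cassiniR k v)
  exact squeeze_zero (fun n => hrnn _) hstep hlim
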